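/- Let K be a rationally additive semiring, A a finite alphabet, π : A* → K a monoid homomorphism from the free monoid A* into the multiplicative monoid of K, and L ⊆ A* a regular language. Then the (possibly infinite) sum Σ_{w∈L} π(w) exists in K. -/

import Mathlib

/-- A *rationally additive semiring* is a semiring `K` equipped with a partial operator
assigning to some (countable) families `(f i)_{i ∈ I}` a sum `sum f ∈ K` (`Option`-valued:
`some s` means the sum exists and equals `s`, `none` means the family is not summable),
satisfying axioms (Ax1)–(Ax5) of Ésik and Kuich. Disjoint countable partitions of the index
set `I` are represented by a map `p : I → J` whose fibres are the blocks. -/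
structure RatAdd (K : Type) [Semiring K] : Type 1 where
  /-- the partial countable-sum operator -/
  sum : {I : Type} → (I → K) → Option K
  /-- (Ax1) every finite family is summable, with the usual finite sum as its sum -/
  ax1 : ∀ {I : Type} [Fintype I] (f : I → K), sum f = some (∑ i, f i)
  /-- (Ax2) geometric families are summable -/
  ax2 : ∀ α : K, (sum fun n : ℕ => α ^ n).isSome
  /-- (Ax3, left) products distribute on the left over existing sums -/
  ax3l : ∀ {I : Type} [Countable I] (f : I → K) (s β : K),
    sum f = some s → sum (fun i => β * f i) = some (β * s)
  /-- (Ax3, right) products distribute on the right over existing sums -/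
  ax3r : ∀ {I : Type} [Countable I] (f : I → K) (s β : K),
    sum f = some s → sum (fun i => f i * β) = some (s * β)
  /-- (Ax4) if each block of a countable partition is summable with sum `r j`, and the
  family of the `r j` is summable with sum `s`, then the whole family is summable with sum `s` -/
  ax4 : ∀ {I J : Type} [Countable I] [Countable J] (p : I → J) (f : I → K) (r : J → K),
    (∀ j : J, sum (fun i : {i : I // p i = j} => f i.val) = some (r j)) →
    ∀ s : K, sum r = some s → sum f = some s
  /-- (Ax5) if the whole family is summable with sum `s`, and each block of a countable
  partition is summable with sum `r j`, then the family of the `r j` is summable with sum `s` -/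
  ax5 : ∀ {I J : Type} [Countable I] [Countable J] (p : I → J) (f : I → K) (r : J → K),
    (∀ j : J, sum (fun i : {i : I // p i = j} => f i.val) = some (r j)) →
    ∀ s : K, sum f = some s → sum r = some s


namespace RatAddAux

variable {K : Type} [Semiring K] (R : RatAdd K)

/-- Transfer a sum along a bijection. -/
lemma sum_bij {I J : Type} [Countable I] [Countable J] (φ : J → I)
    (hφ : Function.Bijective φ) (f : I → K) (g : J → K)
    (hfg : ∀ j, f (φ j) = g j) (s : K)
    (h : R.sum g = some s) : R.sum f = some s := by
  set e : J ≃ I := Equiv.ofBijective φ hφ with he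
  apply R.ax4 e.symm f g _ s h
  intro j
  letI : Unique {i : I // e.symm i = j} :=
    { default := ⟨φ j, e.symm_apply_eq.mpr rfl⟩
      uniq := fun x => Subtype.ext (by
        have hx := x.2
        rw [Equiv.symm_apply_eq] at hx
        exact hx) }
  rw [R.ax1]
  congr 1
  rw [Fintype.sum_unique]
  show f (φ j) = g j
  exact hfg j

lemma sum_isEmpty {I : Type} [IsEmpty I] (f : I → K) : R.sum f = some 0 := by
  haveI : Fintype I := Fintype.ofIsEmpty
  rw [R.ax1]; simp

lemma sum_punit (c : K) : R.sum (fun _ : PUnit => c) = some c := by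
  rw [R.ax1]; simp

lemma sum_sumType {I J : Type} [Countable I] [Countable J] (f : I → K) (g : J → K)
    (s t : K) (hf : R.sum f = some s) (hg : R.sum g = some t) :
    R.sum (Sum.elim f g) = some (s + t) := by
  refine R.ax4 (Sum.elim (fun _ => true) (fun _ => false)) (Sum.elim f g)
    (fun b => cond b s t) ?_ (s + t) (by rw [R.ax1, Fintype.sum_bool]; rfl)
  · intro b
    cases b
    · have hφ : Function.Bijective (fun j : J =>
          (⟨Sum.inr j, rfl⟩ : {x : I ⊕ J // Sum.elim (fun _ => true) (fun _ => false) x = false})) := by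
        constructor
        · intro a b hab; simpa using congrArg Subtype.val hab
        · rintro ⟨x | y, hx⟩
          · simp at hx
          · exact ⟨y, rfl⟩
      exact sum_bij R _ hφ _ g (fun j => rfl) t hg
    · have hφ : Function.Bijective (fun i : I =>
          (⟨Sum.inl i, rfl⟩ : {x : I ⊕ J // Sum.elim (fun _ => true) (fun _ => false) x = true})) := by
        constructor
        · intro a b hab; simpa using congrArg Subtype.val hab
        · rintro ⟨x | y, hx⟩
          · exact ⟨x, rfl⟩
          · simp at hx
      exact sum_bij R _ hφ _ f (fun i => rfl) s hf

lemma sum_prod {I J : Type} [Countable I] [Countable J] (f : I → K) (g : J → K)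
    (s t : K) (hf : R.sum f = some s) (hg : R.sum g = some t) :
    R.sum (fun x : I × J => f x.1 * g x.2) = some (s * t) := by
  refine R.ax4 Prod.snd _ (fun j => s * g j) ?_ (s * t) (R.ax3l g t s hg)
  intro j
  have hφ : Function.Bijective (fun i : I => (⟨(i, j), rfl⟩ : {x : I × J // x.snd = j})) := by
    constructor
    · intro a b hab; simpa using congrArg (fun z => z.val.1) hab
    · rintro ⟨⟨i, j'⟩, hx⟩
      cases hx
      exact ⟨i, rfl⟩
  exact sum_bij R _ hφ _ (fun i => f i * g j) (fun i => rfl) _ (R.ax3r f s (g j) hf)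

/-- Sums over lists: the "star" of a summable family. -/
lemma sum_list {I : Type} [Countable I] (f : I → K) (s : K) (hf : R.sum f = some s) :
    ∃ t, R.sum (fun l : List I => (l.map f).prod) = some t := by
  obtain ⟨t, ht⟩ := Option.isSome_iff_exists.mp (R.ax2 s)
  refine ⟨t, R.ax4 List.length _ (fun n => s ^ n) ?_ t ht⟩
  intro n
  induction n with
  | zero =>
    have hφ : Function.Bijective (fun _ : PUnit =>
        (⟨[], rfl⟩ : {l : List I // l.length = 0})) := by
      constructor
      · intro a b _; rfl
      · rintro ⟨l, hl⟩
        exact ⟨PUnit.unit, Subtype.ext (List.length_eq_zero_iff.mp hl).symm⟩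
    refine sum_bij R _ hφ _ (fun _ => 1) (fun _ => rfl) _ ?_
    rw [R.ax1]; simp
  | succ n ih =>
    have hφ : Function.Bijective (fun x : I × {l : List I // l.length = n} =>
        (⟨x.1 :: x.2.val, by simp [x.2.2]⟩ : {l : List I // l.length = n + 1})) := by
      constructor
      · rintro ⟨a, la⟩ ⟨b, lb⟩ hab
        have := congrArg Subtype.val hab
        simp only [List.cons.injEq] at this
        exact Prod.ext this.1 (Subtype.ext this.2)
      · rintro ⟨l, hl⟩
        match l, hl with
        | a :: l', hl =>
          exact ⟨(a, ⟨l', by simpa using hl⟩), rfl⟩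
    have hprod := sum_prod R f (fun l : {l : List I // l.length = n} => (l.val.map f).prod)
      s (s ^ n) hf ih
    rw [← pow_succ'] at hprod
    refine sum_bij R _ hφ _ _ ?_ _ hprod
    rintro ⟨a, l⟩
    simp

section DFAPart

variable {A : Type} {σ : Type} (M : DFA A σ)

/-- `Ok M X p q w`: `w` is a nonempty word leading from `p` to `q` in `M` with all
strictly-intermediate states belonging to `X`. -/
def Ok (X : Set σ) (p q : σ) (w : List A) : Prop :=
  w ≠ [] ∧ M.evalFrom p w = q ∧ ∀ k, 0 < k → k < w.length → M.evalFrom p (w.take k) ∈ X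

/-- `Cut M r p w k`: position `k` is a strictly internal visit of state `r`. -/
def Cut (r p : σ) (w : List A) (k : ℕ) : Prop :=
  0 < k ∧ k < w.length ∧ M.evalFrom p (w.take k) = r

lemma ok_mono {X Y : Set σ} (hXY : X ⊆ Y) {p q : σ} {w : List A} (h : Ok M X p q w) :
    Ok M Y p q w :=
  ⟨h.1, h.2.1, fun k hk0 hkl => hXY (h.2.2 k hk0 hkl)⟩

lemma take_app_of_le {u v : List A} {k : ℕ} (h : k ≤ u.length) :
    (u ++ v).take k = u.take k := by
  rw [List.take_append, Nat.sub_eq_zero_of_le h, List.take_zero,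
    List.append_nil]

lemma take_app_add {u v : List A} (j : ℕ) :
    (u ++ v).take (u.length + j) = u ++ v.take j := by
  rw [List.take_append, List.take_of_length_le (Nat.le_add_right _ _),
    Nat.add_sub_cancel_left]

lemma ok_nocut {X : Set σ} {r : σ} (hr : r ∉ X) {p q' : σ} {w : List A}
    (hw : Ok M X p q' w) : ∀ k, ¬ Cut M r p w k := by
  rintro k ⟨hk0, hkl, hkr⟩
  exact hr (hkr ▸ hw.2.2 k hk0 hkl)

lemma nocut_ok {X : Set σ} {r : σ} {p q' : σ} {w : List A}
    (hw : Ok M (insert r X) p q' w) (h : ∀ k, ¬ Cut M r p w k) : Ok M X p q' w := by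
  refine ⟨hw.1, hw.2.1, fun k hk0 hkl => ?_⟩
  rcases Set.mem_insert_iff.mp (hw.2.2 k hk0 hkl) with hh | hh
  · exact absurd ⟨hk0, hkl, hh⟩ (h k)
  · exact hh

lemma glue {X : Set σ} {r : σ} (hr : r ∉ X) {p q' : σ} {u v : List A}
    (hu : Ok M X p r u) (hv : Ok M (insert r X) r q' v) :
    Ok M (insert r X) p q' (u ++ v) ∧ Cut M r p (u ++ v) u.length ∧
      ∀ k, Cut M r p (u ++ v) k → u.length ≤ k := by
  obtain ⟨hune, heu, hiu⟩ := hu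
  obtain ⟨hvne, hev, hiv⟩ := hv
  have hlu : 0 < u.length := List.length_pos_iff.mpr hune
  have hlv : 0 < v.length := List.length_pos_iff.mpr hvne
  have hlen : (u ++ v).length = u.length + v.length := List.length_append
  refine ⟨⟨by simp [hune], ?_, ?_⟩, ⟨hlu, by omega, by rw [List.take_left, heu]⟩, ?_⟩
  · rw [M.evalFrom_of_append, heu, hev]
  · intro k hk0 hkl
    rcases lt_trichotomy k u.length with h | h | h
    · rw [take_app_of_le (le_of_lt h)]
      exact Set.mem_insert_of_mem _ (hiu k hk0 h)
    · subst h
      rw [List.take_left, heu]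
      exact Set.mem_insert _ _
    · have hkj : k = u.length + (k - u.length) := by omega
      rw [hkj, take_app_add, M.evalFrom_of_append, heu]
      exact hiv (k - u.length) (by omega) (by omega)
  · rintro k ⟨hk0, hkl, hkr⟩
    by_contra hcon
    have hklt : k < u.length := by omega
    rw [take_app_of_le (le_of_lt hklt)] at hkr
    exact hr (hkr ▸ hiu k hk0 hklt)

lemma split {X : Set σ} {r : σ} {p q' : σ} {w : List A}
    (hw : Ok M (insert r X) p q' w) {k : ℕ} (hk : Cut M r p w k)
    (hmin : ∀ k', Cut M r p w k' → k ≤ k') :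
    Ok M X p r (w.take k) ∧ Ok M (insert r X) r q' (w.drop k) := by
  obtain ⟨hne, hev, hiv⟩ := hw
  obtain ⟨hk0, hklen, hkr⟩ := hk
  have hlt : (w.take k).length = k := by rw [List.length_take]; omega
  have hevtake : M.evalFrom p (w.take k) = r := hkr
  constructor
  · refine ⟨by intro h; rw [h] at hlt; simp at hlt; omega, hevtake, ?_⟩
    intro j hj0 hjk
    rw [hlt] at hjk
    rw [List.take_take, min_eq_left (le_of_lt hjk)]
    rcases Set.mem_insert_iff.mp (hiv j hj0 (lt_trans hjk hklen)) with hh | hh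
    · exact absurd (hmin j ⟨hj0, lt_trans hjk hklen, hh⟩) (by omega)
    · exact hh
  · have hdlen : (w.drop k).length = w.length - k := List.length_drop
    refine ⟨by intro h; rw [h] at hdlen; simp at hdlen; omega, ?_, ?_⟩
    · have := M.evalFrom_of_append p (w.take k) (w.drop k)
      rw [List.take_append_drop, hevtake] at this
      rw [← this, hev]
    · intro j hj0 hjl
      have htadd : w.take (k + j) = w.take k ++ (w.drop k).take j := List.take_add
      have : M.evalFrom r ((w.drop k).take j) = M.evalFrom p (w.take (k + j)) := by
        rw [htadd, M.evalFrom_of_append, hevtake]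
      rw [this]
      exact hiv (k + j) (by omega) (by omega)

end DFAPart



section Main

variable {K : Type} [Semiring K] (R : RatAdd K)
variable {A : Type} {σ : Type} (M : DFA A σ)

lemma exists_min_cut {r p : σ} {w : List A} (h : ∃ k, Cut M r p w k) :
    ∃ k, Cut M r p w k ∧ ∀ k', Cut M r p w k' → k ≤ k' := by
  classical
  exact ⟨Nat.find h, Nat.find_spec h, fun k' hk' => Nat.find_min' h hk'⟩

lemma wt_join (π : FreeMonoid A →* K) (bs : List (List A)) :
    π (FreeMonoid.ofList bs.flatten) = (bs.map (fun b => π (FreeMonoid.ofList b))).prod := by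
  induction bs with
  | nil => simp
  | cons b bs ih =>
    rw [List.map_cons, List.prod_cons, ← ih, show (b :: bs).flatten = b ++ bs.flatten from rfl,
      FreeMonoid.ofList_append, map_mul]

/-- join a list of `Ok X r r` blocks followed by an `insert r X`-word stays OK. -/
lemma join_ok {X : Set σ} {r q : σ} (hr : r ∉ X) {v : List A}
    (hv : Ok M (insert r X) r q v) :
    ∀ bs : List {w : List A // Ok M X r r w},
      Ok M (insert r X) r q ((bs.map Subtype.val).flatten ++ v) := by
  intro bs
  induction bs with
  | nil => simpa using hv
  | cons b bs ih =>
    have := (glue M hr b.2 ih).1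
    simpa [List.append_assoc] using this

/-- unique factorisation at the first internal `r`-visit. -/
lemma first_cut_unique {X : Set σ} {r p q : σ} (hr : r ∉ X)
    {u u' v v' : List A} (hu : Ok M X p r u) (hu' : Ok M X p r u')
    (hv : Ok M (insert r X) r q v) (hv' : Ok M (insert r X) r q v')
    (heq : u ++ v = u' ++ v') : u = u' ∧ v = v' := by
  obtain ⟨-, hcut, hmin⟩ := glue M hr hu hv
  obtain ⟨-, hcut', hmin'⟩ := glue M hr hu' hv'
  rw [← heq] at hcut' hmin'
  have h1 := hmin _ hcut'
  have h2 := hmin' _ hcut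
  exact List.append_inj heq (by omega)

lemma sum_ok [Fintype A] (π : FreeMonoid A →* K) (X : Finset σ) :
    ∀ p q : σ, ∃ s,
      R.sum (fun w : {w : List A // Ok M (↑X) p q w} => π (FreeMonoid.ofList w.val))
        = some s := by
  classical
  induction X using Finset.induction_on with
  | empty =>
    intro p q
    have hφ : Function.Bijective (fun a : {a : A // M.step p a = q} =>
        (⟨[a.val], by
          refine ⟨by simp, by simp [a.2], ?_⟩
          intro k hk0 hkl
          simp only [List.length_singleton] at hkl
          omega⟩ : {w : List A // Ok M (↑(∅ : Finset σ)) p q w})) := by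
      constructor
      · intro a b hab
        have := congrArg Subtype.val hab
        simp only [List.cons.injEq] at this
        exact Subtype.ext this.1
      · rintro ⟨w, hne, hev, hint⟩
        have hw1 : w.length = 1 := by
          have h0 : w.length ≠ 0 := fun h => hne (List.length_eq_zero_iff.mp h)
          by_contra hcon
          have h2 : 1 < w.length := by omega
          have := hint 1 (by omega) h2
          simp at this
        obtain ⟨a, rfl⟩ := List.length_eq_one_iff.mp hw1
        exact ⟨⟨a, by simpa using hev⟩, Subtype.ext rfl⟩
    exact ⟨_, sum_bij R _ hφ _ (fun a => π (FreeMonoid.ofList [a.val]))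
      (fun a => rfl) _ (R.ax1 _)⟩
  | @insert r X hrX ih =>
    intro p q
    have hr : r ∉ (↑X : Set σ) := by simpa using hrX
    have hco : (↑(insert r X) : Set σ) = insert r (↑X : Set σ) := Finset.coe_insert r X
    rw [hco]
    -- notation
    set S : Set σ := (↑X : Set σ) with hS
    -- sums from the induction hypothesis
    obtain ⟨srr, hsrr⟩ := ih r r
    obtain ⟨srq, hsrq⟩ := ih r q
    obtain ⟨spr, hspr⟩ := ih p r
    obtain ⟨spq, hspq⟩ := ih p q
    -- Step A : sum over W := words r → q with intermediates in insert r S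
    obtain ⟨tstar, htstar⟩ := sum_list R
      (fun b : {w : List A // Ok M S r r w} => π (FreeMonoid.ofList b.val)) srr hsrr
    have hWprod := sum_prod R
      (fun l : List {w : List A // Ok M S r r w} =>
        (l.map (fun b => π (FreeMonoid.ofList b.val))).prod)
      (fun v : {w : List A // Ok M S r q w} => π (FreeMonoid.ofList v.val))
      tstar srq htstar hsrq
    have hφ2 : Function.Bijective
        (fun x : List {w : List A // Ok M S r r w} × {w : List A // Ok M S r q w} =>
          (⟨(x.1.map Subtype.val).flatten ++ x.2.val,
            join_ok M hr (ok_mono M (Set.subset_insert r S) x.2.2) x.1⟩ :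
            {w : List A // Ok M (insert r S) r q w})) := by
      constructor
      · rintro ⟨bs, v⟩ ⟨bs', v'⟩ hx
        have hval := congrArg Subtype.val hx
        simp only at hval
        clear hx
        induction bs generalizing bs' with
        | nil =>
          cases bs' with
          | nil =>
            simp only [List.map_nil, List.flatten, List.nil_append] at hval
            exact Prod.ext rfl (Subtype.ext hval)
          | cons b' bs' =>
            exfalso
            have hnc := ok_nocut M hr v.2
            have hcut := (glue M hr b'.2
              (join_ok M hr (ok_mono M (Set.subset_insert r S) v'.2) bs')).2.1
            rw [show b'.val ++ ((bs'.map Subtype.val).flatten ++ v'.val)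
                = ((b' :: bs').map Subtype.val).flatten ++ v'.val by
              simp [List.append_assoc]] at hcut
            rw [← hval] at hcut
            simp only [List.map_nil, List.flatten, List.nil_append] at hval ⊢
            exact hnc _ hcut
        | cons b bs ihbs =>
          cases bs' with
          | nil =>
            exfalso
            have hnc := ok_nocut M hr v'.2
            have hcut := (glue M hr b.2
              (join_ok M hr (ok_mono M (Set.subset_insert r S) v.2) bs)).2.1
            rw [show b.val ++ ((bs.map Subtype.val).flatten ++ v.val)
                = ((b :: bs).map Subtype.val).flatten ++ v.val by
              simp [List.append_assoc]] at hcut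
            rw [hval] at hcut
            simp only [List.map_nil, List.flatten, List.nil_append] at hcut
            exact hnc _ hcut
          | cons b' bs' =>
            have heq : b.val ++ ((bs.map Subtype.val).flatten ++ v.val)
                = b'.val ++ ((bs'.map Subtype.val).flatten ++ v'.val) := by
              simpa [List.append_assoc] using hval
            obtain ⟨hb, htail⟩ := first_cut_unique M hr b.2 b'.2
              (join_ok M hr (ok_mono M (Set.subset_insert r S) v.2) bs)
              (join_ok M hr (ok_mono M (Set.subset_insert r S) v'.2) bs')
              heq
            have := ihbs bs' htail
            have hbsv : bs = bs' ∧ v = v' :=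
              ⟨congrArg Prod.fst this, congrArg Prod.snd this⟩
            rw [Subtype.ext hb, hbsv.1, hbsv.2]
      · rintro ⟨w, hw⟩
        suffices h : ∀ n (w : List A), Ok M (insert r S) r q w → w.length ≤ n →
            ∃ (bs : List {w : List A // Ok M S r r w}) (v : {w : List A // Ok M S r q w}),
              (bs.map Subtype.val).flatten ++ v.val = w by
          obtain ⟨bs, v, hbv⟩ := h w.length w hw le_rfl
          exact ⟨(bs, v), Subtype.ext hbv⟩
        intro n
        induction n with
        | zero =>
          intro w hw hlen
          exact absurd (List.length_eq_zero_iff.mp (Nat.le_zero.mp hlen)) hw.1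
        | succ n ihn =>
          intro w hw hlen
          by_cases hcut : ∃ k, Cut M r r w k
          · obtain ⟨k, hk, hmin⟩ := exists_min_cut M hcut
            obtain ⟨hu, hv⟩ := split M hw hk hmin
            have hdl : (w.drop k).length ≤ n := by
              have : (w.drop k).length = w.length - k := List.length_drop
              have hk0 := hk.1
              have hkl := hk.2.1
              omega
            obtain ⟨bs, v, hbv⟩ := ihn (w.drop k) hv hdl
            refine ⟨⟨w.take k, hu⟩ :: bs, v, ?_⟩
            simp only [List.map_cons, List.flatten_cons, List.append_assoc]
            rw [hbv, List.take_append_drop]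
          · push_neg at hcut
            have := nocut_ok M hw hcut
            exact ⟨[], ⟨w, this⟩, by simp⟩
    have hWsum : R.sum (fun w : {w : List A // Ok M (insert r S) r q w} =>
        π (FreeMonoid.ofList w.val)) = some (tstar * srq) := by
      refine sum_bij R _ hφ2 _ _ ?_ _ hWprod
      rintro ⟨bs, v⟩
      simp only
      rw [FreeMonoid.ofList_append, map_mul, wt_join, List.map_map]
      rfl
    -- Step B : Y ≃ Npq ⊕ (Npr × W)
    have hφ1 : Function.Bijective
        (Sum.elim
          (fun w : {w : List A // Ok M S p q w} =>
            (⟨w.val, ok_mono M (Set.subset_insert r S) w.2⟩ :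
              {w : List A // Ok M (insert r S) p q w}))
          (fun x : {w : List A // Ok M S p r w} ×
              {w : List A // Ok M (insert r S) r q w} =>
            (⟨x.1.val ++ x.2.val, (glue M hr x.1.2 x.2.2).1⟩ :
              {w : List A // Ok M (insert r S) p q w}))) := by
      constructor
      · rintro (w | ⟨u, v⟩) (w' | ⟨u', v'⟩) hx <;>
          have hval := congrArg Subtype.val hx <;> simp only [Sum.elim_inl, Sum.elim_inr] at hval
        · exact congrArg Sum.inl (Subtype.ext hval)
        · exfalso
          have hnc := ok_nocut M hr w.2
          have hcut := (glue M hr u'.2 v'.2).2.1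
          rw [← hval] at hcut
          exact hnc _ hcut
        · exfalso
          have hnc := ok_nocut M hr w'.2
          have hcut := (glue M hr u.2 v.2).2.1
          rw [hval] at hcut
          exact hnc _ hcut
        · obtain ⟨h1, h2⟩ := first_cut_unique M hr u.2 u'.2 v.2 v'.2 hval
          rw [Subtype.ext h1, Subtype.ext h2]
      · rintro ⟨w, hw⟩
        by_cases hcut : ∃ k, Cut M r p w k
        · obtain ⟨k, hk, hmin⟩ := exists_min_cut M hcut
          obtain ⟨hu, hv⟩ := split M hw hk hmin
          refine ⟨Sum.inr (⟨w.take k, hu⟩, ⟨w.drop k, hv⟩), ?_⟩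
          simp only [Sum.elim_inr]
          exact Subtype.ext (List.take_append_drop k w)
        · push_neg at hcut
          exact ⟨Sum.inl ⟨w, nocut_ok M hw hcut⟩, rfl⟩
    have hBsum := sum_sumType R
      (fun w : {w : List A // Ok M S p q w} => π (FreeMonoid.ofList w.val))
      (fun x : {w : List A // Ok M S p r w} ×
          {w : List A // Ok M (insert r S) r q w} =>
        π (FreeMonoid.ofList x.1.val) * π (FreeMonoid.ofList x.2.val))
      spq (spr * (tstar * srq)) hspq
      (sum_prod R _ _ spr (tstar * srq) hspr hWsum)
    refine ⟨spq + spr * (tstar * srq), sum_bij R _ hφ1 _ _ ?_ _ hBsum⟩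
    rintro (w | ⟨u, v⟩)
    · rfl
    · simp only [Sum.elim_inr]
      rw [FreeMonoid.ofList_append, map_mul]

end Main

end RatAddAux

/-- For every finite alphabet `A`, every monoid homomorphism `π` from the free monoid `A*`
into the multiplicative monoid of a rationally additive semiring `K`, and every regular
language `L ⊆ A*`, the sum `Σ_{w ∈ L} π(w)` exists in `K`. -/
theorem ratAdd_sum_regular_exists (K : Type) [Semiring K] (R : RatAdd K)
    (A : Type) [Fintype A] (π : FreeMonoid A →* K)
    (L : Language A) (hL : L.IsRegular) :
    (R.sum (fun w : {w : List A // w ∈ L} => π (FreeMonoid.ofList w.val))).isSome := by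
  classical
  obtain ⟨σ, hfin, M, hM⟩ := hL
  subst hM
  -- Step 1: for each state q, the sum over all words evaluating to q exists.
  have hstate : ∀ q : σ, ∃ s, R.sum (fun w : {w : List A // M.eval w = q} =>
      π (FreeMonoid.ofList w.val)) = some s := by
    intro q
    obtain ⟨s, hs⟩ := RatAddAux.sum_ok R M π (Finset.univ : Finset σ) M.start q
    by_cases hq : M.start = q
    · have hφ : Function.Bijective (Sum.elim
          (fun _ : PUnit => (⟨[], hq⟩ : {w : List A // M.eval w = q}))
          (fun w : {w : List A // RatAddAux.Ok M (↑(Finset.univ : Finset σ)) M.start q w} =>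
            (⟨w.val, w.2.2.1⟩ : {w : List A // M.eval w = q}))) := by
        constructor
        · rintro (⟨⟩ | w) (⟨⟩ | w') hx <;>
            have hval := congrArg Subtype.val hx <;>
            simp only [Sum.elim_inl, Sum.elim_inr] at hval
          · rfl
          · exact absurd hval.symm w'.2.1
          · exact absurd hval w.2.1
          · exact congrArg Sum.inr (Subtype.ext hval)
        · rintro ⟨w, hw⟩
          rcases eq_or_ne w [] with rfl | hne
          · exact ⟨Sum.inl PUnit.unit, Subtype.ext rfl⟩
          · exact ⟨Sum.inr ⟨w, hne, hw, fun k _ _ => by simp⟩, rfl⟩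
      have hsum := RatAddAux.sum_sumType R
        (fun _ : PUnit => π (FreeMonoid.ofList ([] : List A)))
        (fun w : {w : List A // RatAddAux.Ok M (↑(Finset.univ : Finset σ)) M.start q w} =>
          π (FreeMonoid.ofList w.val))
        _ s (RatAddAux.sum_punit R _) hs
      refine ⟨_, RatAddAux.sum_bij R _ hφ _ _ ?_ _ hsum⟩
      rintro (⟨⟩ | w) <;> rfl
    · have hφ : Function.Bijective
          (fun w : {w : List A // RatAddAux.Ok M (↑(Finset.univ : Finset σ)) M.start q w} =>
            (⟨w.val, w.2.2.1⟩ : {w : List A // M.eval w = q})) := by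
        constructor
        · intro a b hab
          exact Subtype.ext (congrArg
            (fun z : {w : List A // M.eval w = q} => z.val) hab)
        · rintro ⟨w, hw⟩
          rcases eq_or_ne w [] with rfl | hne
          · exact absurd hw hq
          · exact ⟨⟨w, hne, hw, fun k _ _ => by simp⟩, rfl⟩
      exact ⟨s, RatAddAux.sum_bij R _ hφ _ _ (fun w => rfl) _ hs⟩
  choose rq hrq using hstate
  -- Step 2: partition the language by the state reached.
  rw [Option.isSome_iff_exists]
  refine ⟨_, R.ax4 (fun w => M.eval w.val) _
    (fun q => if q ∈ M.accept then rq q else 0) ?_ _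
    (R.ax1 (fun q => if q ∈ M.accept then rq q else 0))⟩
  intro q
  by_cases hq : q ∈ M.accept
  · rw [show (if q ∈ M.accept then rq q else 0) = rq q by simp [hq]]
    have hφ : Function.Bijective (fun w : {w : List A // M.eval w = q} =>
        (⟨⟨w.val, M.mem_accepts.mpr (by rw [w.2]; exact hq)⟩, w.2⟩ :
          {x : {w : List A // w ∈ M.accepts} // M.eval x.val = q})) := by
      constructor
      · intro a b hab
        apply Subtype.ext
        exact congrArg (fun z : {x : {w : List A // w ∈ M.accepts} // M.eval x.val = q} =>
          z.val.val) hab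
      · rintro ⟨⟨w, hwacc⟩, hwq⟩
        exact ⟨⟨w, hwq⟩, rfl⟩
    exact RatAddAux.sum_bij R _ hφ _ _ (fun w => rfl) _ (hrq q)
  · rw [show (if q ∈ M.accept then rq q else 0) = 0 by simp [hq]]
    haveI : IsEmpty {x : {w : List A // w ∈ M.accepts} // M.eval x.val = q} := by
      constructor
      rintro ⟨⟨w, hwacc⟩, hwq⟩
      exact hq (hwq ▸ M.mem_accepts.mp hwacc)
    exact RatAddAux.sum_isEmpty R _
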